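/- An A-valued function algebra 𝒜 on X is natural (every maximal ideal of 𝒜 has the form {f ∈ 𝒜 : f(x₀) ∈ M} for some x₀ ∈ X and maximal ideal M of A) if and only if for every proper ideal ℐ of 𝒜 there exists x₀ ∈ X with ℐ(x₀) ≠ A. -/

import Mathlib

variable {X : Type*} [TopologicalSpace X] [CompactSpace X] [T2Space X]
variable {A : Type*} [NormedCommRing A] [NormedAlgebra ℂ A] [CompleteSpace A] [Nontrivial A]

/-- Evaluation at a point, as a ring homomorphism on an `A`-valued function algebra
`𝒜 ⊆ C(X, A)`. -/
def evalHom (𝒜 : Subalgebra ℂ C(X, A)) (x : X) : ↥𝒜 →+* A where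
  toFun f := (f : C(X, A)) x
  map_one' := rfl
  map_mul' _ _ := rfl
  map_zero' := rfl
  map_add' _ _ := rfl

theorem evalHom_surjective (𝒜 : Subalgebra ℂ C(X, A))
    (hconst : ∀ a : A, ContinuousMap.const X a ∈ 𝒜) (x : X) :
    Function.Surjective (evalHom 𝒜 x) := fun a =>
  ⟨⟨ContinuousMap.const X a, hconst a⟩, rfl⟩

/-- 𝒜 is natural iff every proper ideal ℐ of 𝒜 has ℐ(x₀) ≠ A for some x₀ ∈ X. -/
theorem stmt5 (𝒜 : Subalgebra ℂ C(X, A))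
    (hconst : ∀ a : A, ContinuousMap.const X a ∈ 𝒜)
    (hsep : ∀ x y : X, x ≠ y → ∀ M : Ideal A, M.IsMaximal → ∃ f ∈ 𝒜, f x - f y ∉ M) :
    (∀ ℳ : Ideal ↥𝒜, ℳ.IsMaximal → ∃ (x₀ : X) (M : Ideal A), M.IsMaximal ∧
        ∀ f : ↥𝒜, f ∈ ℳ ↔ (f : C(X, A)) x₀ ∈ M) ↔
      (∀ ℐ : Ideal ↥𝒜, ℐ ≠ ⊤ →
        ∃ x₀ : X, {a : A | ∃ f ∈ ℐ, (f : C(X, A)) x₀ = a} ≠ Set.univ) := by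
  constructor
  · intro h ℐ hℐ
    obtain ⟨ℳ, hmax, hle⟩ := Ideal.exists_le_maximal ℐ hℐ
    obtain ⟨x₀, M, hM, hdesc⟩ := h ℳ hmax
    refine ⟨x₀, fun hall => ?_⟩
    have h1 : (1 : A) ∈ {a : A | ∃ f ∈ ℐ, (f : C(X, A)) x₀ = a} := hall ▸ Set.mem_univ _
    obtain ⟨f, hf, hfx⟩ := h1
    have : (f : C(X, A)) x₀ ∈ M := (hdesc f).mp (hle hf)
    rw [hfx] at this
    exact hM.ne_top (Ideal.eq_top_of_isUnit_mem M this isUnit_one)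
  · intro h ℳ hmax
    obtain ⟨x₀, hx₀⟩ := h ℳ hmax.ne_top
    set S : Ideal A := Ideal.map (evalHom 𝒜 x₀) ℳ with hS
    have hsurj := evalHom_surjective 𝒜 hconst x₀
    have hScarrier : (S : Set A) = {a : A | ∃ f ∈ ℳ, (f : C(X, A)) x₀ = a} := by
      ext a
      simp only [SetLike.mem_coe, Ideal.mem_map_iff_of_surjective _ hsurj, Set.mem_setOf_eq]
      rw [hS, Ideal.mem_map_iff_of_surjective _ hsurj]
      rfl
    have hSne : S ≠ ⊤ := by
      intro hST
      apply hx₀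
      rw [← hScarrier, hST]
      rfl
    obtain ⟨M, hM, hSM⟩ := Ideal.exists_le_maximal S hSne
    refine ⟨x₀, M, hM, fun f => ⟨fun hf => hSM (Ideal.mem_map_of_mem _ hf), fun hf => ?_⟩⟩
    have hcomap : ℳ = Ideal.comap (evalHom 𝒜 x₀) M := by
      refine (hmax.eq_of_le ?_ ?_).symm ▸ rfl
      · intro hT
        have : (1 : ↥𝒜) ∈ Ideal.comap (evalHom 𝒜 x₀) M := hT ▸ trivial
        exact hM.ne_top (Ideal.eq_top_of_isUnit_mem M this isUnit_one)
      · intro g hg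
        exact hSM (Ideal.mem_map_of_mem _ hg)
    rw [hcomap]
    exact hf
  done
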